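/- arXiv:1803.03572 — 4 statements merged into one kernel-verified Lean document; each statement's English description precedes it below -/
import Mathlib

section
/- Let Q be a finite group acting on a finite abelian group A (written multiplicatively) by automorphisms, and let f : Q × Q → A be a 2-cocycle, i.e. (q₁ • f(q₂,q₃)) · f(q₁, q₂q₃) = f(q₁q₂, q₃) · f(q₁,q₂) for all q₁,q₂,q₃ ∈ Q. Let A* = Hom(A, ℂˣ) be the character group, and let Q ⋉ A* be the group with underlying set Q × A* and multiplication (q,χ)(q',χ') = (qq', (χ ∘ ρ(q'))·χ'), where (χ ∘ ρ(q'))(a) = χ(q' • a). Define φ_f : (Q ⋉ A*)³ → ℂˣ by φ_f((q₁,χ₁),(q₂,χ₂),(q₃,χ₃)) = χ₁(f(q₂,q₃)). Then φ_f is a 3-cocycle on Q ⋉ A* with coefficients in ℂˣ (trivial action), i.e. φ_f(h₂,h₃,h₄) · φ_f(h₁,h₂h₃,h₄) · φ_f(h₁,h₂,h₃) = φ_f(h₁h₂,h₃,h₄) · φ_f(h₁,h₂,h₃h₄) for all h₁,h₂,h₃,h₄ ∈ Q ⋉ A*. -/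
/-- The multiplication of the semidirect product `Q ⋉ A*`:
`(q,χ)(q',χ') = (qq', (χ ∘ ρ(q'))·χ')` where `(χ ∘ ρ(q'))(a) = χ(q' • a)`. -/
def sdMul {Q A : Type} [Group Q] [CommGroup A] [MulDistribMulAction Q A]
    (h h' : Q × (A →* ℂˣ)) : Q × (A →* ℂˣ) :=
  (h.1 * h'.1, (h.2.comp (MulDistribMulAction.toMonoidHom A h'.1)) * h'.2)

/-- Let `Q` be a finite group acting on a finite abelian group `A` by
automorphisms, and let `f : Q × Q → A` be a 2-cocycle.  Define
`φ_f((q₁,χ₁),(q₂,χ₂),(q₃,χ₃)) = χ₁(f(q₂,q₃))` on the semidirect product `Q ⋉ A*`.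
Then `φ_f` is a 3-cocycle on `Q ⋉ A*` with coefficients in `ℂˣ` (trivial action). -/
theorem phi_f_is_three_cocycle
    (Q A : Type) [Group Q] [Finite Q] [CommGroup A] [Finite A]
    [MulDistribMulAction Q A]
    (f : Q → Q → A)
    (hf : ∀ q₁ q₂ q₃ : Q,
      (q₁ • f q₂ q₃) * f q₁ (q₂ * q₃) = f (q₁ * q₂) q₃ * f q₁ q₂)
    (φ : (Q × (A →* ℂˣ)) → (Q × (A →* ℂˣ)) → (Q × (A →* ℂˣ)) → ℂˣ)
    (hφ : ∀ h₁ h₂ h₃ : Q × (A →* ℂˣ), φ h₁ h₂ h₃ = h₁.2 (f h₂.1 h₃.1)) :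
    ∀ h₁ h₂ h₃ h₄ : Q × (A →* ℂˣ),
      φ h₂ h₃ h₄ * φ h₁ (sdMul h₂ h₃) h₄ * φ h₁ h₂ h₃ =
        φ (sdMul h₁ h₂) h₃ h₄ * φ h₁ h₂ (sdMul h₃ h₄) := by
  rintro ⟨q₁, χ₁⟩ ⟨q₂, χ₂⟩ ⟨q₃, χ₃⟩ ⟨q₄, χ₄⟩
  simp only [hφ, sdMul, MonoidHom.mul_apply, MonoidHom.comp_apply,
    MulDistribMulAction.toMonoidHom_apply]
  have key : χ₁ ((q₂ • f q₃ q₄) * f q₂ (q₃ * q₄)) = χ₁ (f (q₂ * q₃) q₄ * f q₂ q₃) := by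
    rw [hf]
  simp only [map_mul] at key
  rw [mul_assoc, ← key]
  simp [mul_comm, mul_left_comm, mul_assoc]
end

section
/- Let Q be a finite group acting on a finite abelian group A (written multiplicatively) by automorphisms, A* = Hom(A, ℂˣ), and Q ⋉ A* the group with multiplication (q,χ)(q',χ') = (qq', (χ ∘ ρ(q'))·χ'), where (χ ∘ ρ(q'))(a) = χ(q' • a). Suppose f : Q × Q → A is a 2-coboundary, i.e. there exists g : Q → A with f(q,q') = (q • g(q')) · g(qq')⁻¹ · g(q) for all q,q' ∈ Q. Then the function φ_f((q₁,χ₁),(q₂,χ₂),(q₃,χ₃)) = χ₁(f(q₂,q₃)) is a 3-coboundary on Q ⋉ A* with coefficients in ℂˣ (trivial action); explicitly, φ_f(h₁,h₂,h₃) = ψ(h₂,h₃) · ψ(h₁h₂,h₃)⁻¹ · ψ(h₁,h₂h₃) · ψ(h₁,h₂)⁻¹ for ψ((q,χ),(q',χ')) = χ(g(q'))⁻¹. Consequently the assignment f ↦ φ_f induces a well-defined map from H²(Q, A) to H³(Q ⋉ A*, ℂˣ). -/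
/-- Let `Q` act on a finite abelian group `A` by automorphisms and suppose
`f : Q × Q → A` is a 2-coboundary, say `f(q,q') = (q • g(q')) · g(qq')⁻¹ · g(q)`.
Then `φ_f((q₁,χ₁),(q₂,χ₂),(q₃,χ₃)) = χ₁(f(q₂,q₃))` is a 3-coboundary on `Q ⋉ A*` with
coefficients in `ℂˣ` (trivial action); explicitly
`φ_f(h₁,h₂,h₃) = ψ(h₂,h₃) · ψ(h₁h₂,h₃)⁻¹ · ψ(h₁,h₂h₃) · ψ(h₁,h₂)⁻¹` where
`ψ((q,χ),(q',χ')) = χ(g(q'))⁻¹`. -/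
theorem phi_f_is_three_coboundary
    (Q A : Type) [Group Q] [Finite Q] [CommGroup A] [Finite A]
    [MulDistribMulAction Q A]
    (f : Q → Q → A) (g : Q → A)
    (hf : ∀ q q' : Q, f q q' = (q • g q') * (g (q * q'))⁻¹ * g q)
    (φ : (Q × (A →* ℂˣ)) → (Q × (A →* ℂˣ)) → (Q × (A →* ℂˣ)) → ℂˣ)
    (hφ : ∀ h₁ h₂ h₃ : Q × (A →* ℂˣ), φ h₁ h₂ h₃ = h₁.2 (f h₂.1 h₃.1))
    (ψ : (Q × (A →* ℂˣ)) → (Q × (A →* ℂˣ)) → ℂˣ)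
    (hψ : ∀ h h' : Q × (A →* ℂˣ), ψ h h' = (h.2 (g h'.1))⁻¹) :
    ∀ h₁ h₂ h₃ : Q × (A →* ℂˣ),
      φ h₁ h₂ h₃ =
        ψ h₂ h₃ * (ψ (sdMul h₁ h₂) h₃)⁻¹ * ψ h₁ (sdMul h₂ h₃) * (ψ h₁ h₂)⁻¹ := by
  intro h₁ h₂ h₃
  simp only [hφ, hψ, hf, sdMul, MonoidHom.mul_apply, MonoidHom.coe_comp,
    Function.comp_apply, MulDistribMulAction.toMonoidHom_apply, map_mul, map_inv]
  simp [mul_assoc, mul_comm, mul_left_comm]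
end

section
/- Let Q and K be finite groups such that H²(Q, ℂˣ) and H²(K, ℂˣ) are both trivial (coefficients with trivial action). Then there is an isomorphism of abelian groups H²(Q, Hom(K, ℂˣ)) ≅ H²(K, Hom(Q, ℂˣ)), where Hom(K, ℂˣ) and Hom(Q, ℂˣ) carry the trivial actions of Q and K respectively. -/
open groupCohomology CategoryTheory

namespace H2Symm
section Shim
variable {k G : Type} [CommRing k] [Group G]

abbrev twoCocycles (A : Rep.{0} k G) := groupCohomology.cocycles₂ A

instance (A : Rep.{0} k G) : AddCommGroup (twoCocycles A) := Submodule.addCommGroup _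

def twoCoboundaries (A : Rep.{0} k G) : Submodule k (twoCocycles A) :=
  (coboundaries₂ A).comap (cocycles₂ A).subtype

abbrev H2 (A : Rep.{0} k G) := twoCocycles A ⧸ twoCoboundaries A

lemma mem_twoCocycles_iff {A : Rep.{0} k G} (f : G × G → A) :
    f ∈ twoCocycles A ↔ ∀ g h j : G, f (g * h, j) + f (g, h) = A.ρ g (f (h, j)) + f (g, h * j) :=
  mem_cocycles₂_iff f

lemma mem_twoCoboundaries_iff {A : Rep.{0} k G} (f : twoCocycles A) :
    f ∈ twoCoboundaries A ↔ ∃ x : G → A, ∀ g h : G, A.ρ g (x h) - x (g * h) + x g = f (g, h) := by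
  simp only [twoCoboundaries, Submodule.mem_comap, Submodule.subtype_apply, coboundaries₂,
    LinearMap.mem_range, funext_iff, Prod.forall, d₁₂_hom_apply]
  rfl

noncomputable def isoH2 (A : Rep.{0} k G) : groupCohomology A 2 ≅ ModuleCat.of k (H2 A) :=
  H2Iso A ≪≫ (Submodule.quotEquivOfEq _ _ (by
    ext x
    exact ⟨fun ⟨y, hy⟩ => ⟨y, congrArg Subtype.val hy⟩, fun ⟨y, hy⟩ => ⟨y, Subtype.ext hy⟩⟩)).toModuleIso

end Shim
end H2Symm

namespace H2Symm

noncomputable def isoAddEquiv {R : Type} [Ring R] {X Y : ModuleCat R} (i : X ≅ Y) : X ≃+ Y :=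
  AddEquiv.mk' ((forget _).mapIso i).toEquiv (fun x y => map_add i.hom.hom x y)

variable {G H : Type} [Group G] [Group H]

noncomputable abbrev AA (G H : Type) [Group G] [Group H] : Rep ℤ G :=
  Rep.trivial ℤ G (Additive (H →* ℂˣ))

def Split (G : Type) [Group G] : Prop :=
  ∀ F : G → G → ℂˣ, (∀ g h j, F (g*h) j * F g h = F h j * F g (h*j)) →
    ∃ c : G → ℂˣ, ∀ g h, F g h = c h * (c (g*h))⁻¹ * c g

lemma split_of_subsingleton
    (hG : Subsingleton (groupCohomology (Rep.trivial ℤ G (Additive ℂˣ)) 2)) : Split G := by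
  haveI := hG
  haveI : Subsingleton (H2 (Rep.trivial ℤ G (Additive ℂˣ))) :=
    ((forget (ModuleCat ℤ)).mapIso (isoH2 _)).toEquiv.symm.subsingleton
  intro F hF
  set A := Rep.trivial ℤ G (Additive ℂˣ)
  have hmem : (fun p : G × G => Additive.ofMul (F p.1 p.2)) ∈ twoCocycles A := by
    rw [mem_twoCocycles_iff]
    intro g h j
    simp only [Representation.isTrivial_apply, ← ofMul_mul]
    exact congrArg Additive.ofMul (hF g h j)
  set f : twoCocycles A := ⟨_, hmem⟩
  have : f ∈ twoCoboundaries A := by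
    have h0 : (Submodule.Quotient.mk f : H2 A) = (Submodule.Quotient.mk 0 : H2 A) :=
      Subsingleton.elim _ _
    simpa [Submodule.Quotient.mk_eq_zero] using h0
  rw [mem_twoCoboundaries_iff] at this
  obtain ⟨x, hx⟩ := this
  refine ⟨fun g => Additive.toMul (x g), fun g h => ?_⟩
  have hx' : (x h - x (g * h) + x g : Additive ℂˣ) = Additive.ofMul (F g h) := by
    have h2 := hx g h
    simp only [Representation.isTrivial_apply] at h2; exact h2
  apply Additive.ofMul.injective
  simp only [ofMul_mul, ofMul_inv, ofMul_toMul]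
  rw [← hx', sub_eq_add_neg]


def mkFun (c : H → G → ℂˣ) (k k' : H) (q : G) : ℂˣ := c k q * c k' q * (c (k*k') q)⁻¹

def IsSplit (F : G → G → (H →* ℂˣ)) (c : H → G → ℂˣ) : Prop :=
  ∀ k g h, F g h k = c k h * (c k (g*h))⁻¹ * c k g

lemma units_eq_of_val {a b : ℂˣ} (h : (a : ℂ) = b) : a = b := Units.ext h

lemma IsSplit.c_mul {F : G → G → (H →* ℂˣ)} {c : H → G → ℂˣ} (Hc : IsSplit F c)
    (k : H) (q q' : G) : (c k (q*q') : ℂ) = c k q' * c k q * (F q q' k : ℂ)⁻¹ := by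
  have h := congrArg Units.val (Hc k q q')
  push_cast at h ⊢
  field_simp at h ⊢
  linear_combination h

lemma mkFun_mul {F : G → G → (H →* ℂˣ)} {c : H → G → ℂˣ} (Hc : IsSplit F c)
    (k k' : H) (q q' : G) : mkFun c k k' (q*q') = mkFun c k k' q * mkFun c k k' q' := by
  apply units_eq_of_val
  have hm : ((F q q' (k*k') : ℂˣ) : ℂ) = (F q q' k : ℂ) * (F q q' k' : ℂ) := by
    rw [map_mul]; push_cast; ring
  simp only [mkFun]
  push_cast
  rw [Hc.c_mul k q q', Hc.c_mul k' q q', Hc.c_mul (k*k') q q', hm]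
  field_simp

/-- The homomorphism `q ↦ c k q * c k' q * (c (k*k') q)⁻¹`. -/
noncomputable def mkHom {F : G → G → (H →* ℂˣ)} {c : H → G → ℂˣ} (Hc : IsSplit F c)
    (k k' : H) : G →* ℂˣ :=
  MonoidHom.mk' (mkFun c k k') (mkFun_mul Hc k k')

@[simp] lemma mkHom_apply {F : G → G → (H →* ℂˣ)} {c : H → G → ℂˣ} (Hc : IsSplit F c)
    (k k' : H) (q : G) : mkHom Hc k k' q = c k q * c k' q * (c (k*k') q)⁻¹ := rfl

/-- The resulting 2-cocycle of `H` valued in characters of `G`. -/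
noncomputable def mkCocycle {F : G → G → (H →* ℂˣ)} {c : H → G → ℂˣ} (Hc : IsSplit F c) :
    twoCocycles (AA H G) :=
  ⟨fun p => Additive.ofMul (mkHom Hc p.1 p.2), by
    refine (mem_twoCocycles_iff _).2 ?_
    intro g h j
    simp only [Representation.isTrivial_apply, ← ofMul_mul]
    refine congrArg Additive.ofMul (MonoidHom.ext fun q => ?_)
    apply units_eq_of_val
    show ((mkHom Hc (g*h) j q * mkHom Hc g h q : ℂˣ) : ℂ) = ((mkHom Hc h j q * mkHom Hc g (h*j) q : ℂˣ) : ℂ)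
    simp only [mkHom_apply]
    rw [show g*(h*j) = g*h*j from (mul_assoc g h j).symm]
    push_cast
    field_simp⟩

lemma mkCocycle_apply {F : G → G → (H →* ℂˣ)} {c : H → G → ℂˣ} (Hc : IsSplit F c)
    (k k' : H) : (mkCocycle Hc (k, k') : Additive (G →* ℂˣ)) = Additive.ofMul (mkHom Hc k k') :=
  rfl


/-- Extract the multiplicative function from a cocycle. -/
noncomputable def toF (f : twoCocycles (AA G H)) : G → G → (H →* ℂˣ) :=
  fun g h => Additive.toMul (α := H →* ℂˣ) (f (g, h))

lemma toF_cocycle (f : twoCocycles (AA G H)) (g h j : G) (k : H) :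
    toF f (g*h) j k * toF f g h k = toF f h j k * toF f g (h*j) k := by
  have hf := (mem_twoCocycles_iff (A := AA G H) (f : G × G → Additive (H →* ℂˣ))).1 f.2 g h j
  have hf' : (f (g*h, j) + f (g, h) : Additive (H →* ℂˣ)) = f (h, j) + f (g, h*j) := by
    simpa only [Representation.isTrivial_apply] using hf
  have := congrArg (fun x => Additive.toMul (α := H →* ℂˣ) x) hf'
  simp only [toMul_add] at this
  exact congrFun (congrArg (fun (φ : H →* ℂˣ) => φ.toFun) this) k

lemma exists_isSplit (SG : Split G) (f : twoCocycles (AA G H)) :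
    ∃ c : H → G → ℂˣ, IsSplit (toF f) c := by
  have h := fun k : H => SG (fun g h => toF f g h k) (fun g h j => toF_cocycle f g h j k)
  choose c hc using h
  exact ⟨c, fun k g h => hc k g h⟩

noncomputable def cchoice (SG : Split G) (f : twoCocycles (AA G H)) : H → G → ℂˣ :=
  (exists_isSplit SG f).choose

lemma cchoice_spec (SG : Split G) (f : twoCocycles (AA G H)) :
    IsSplit (toF f) (cchoice SG f) := (exists_isSplit SG f).choose_spec

/-- Independence of the choice of splitting: the classes agree. -/
lemma mkCocycle_congr {F : G → G → (H →* ℂˣ)} {c c' : H → G → ℂˣ}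
    (Hc : IsSplit F c) (Hc' : IsSplit F c') :
    (Submodule.Quotient.mk (mkCocycle Hc) : H2 (AA H G)) =
      Submodule.Quotient.mk (mkCocycle Hc') := by
  rw [Submodule.Quotient.eq]
  rw [mem_twoCoboundaries_iff]
  have hrat : ∀ (k : H) (q q' : G), (c k (q*q') : ℂ) * ((c' k (q*q') : ℂ))⁻¹ =
      ((c k q : ℂ) * ((c' k q : ℂ))⁻¹) * ((c k q' : ℂ) * ((c' k q' : ℂ))⁻¹) := by
    intro k q q'
    rw [Hc.c_mul k q q', Hc'.c_mul k q q']
    field_simp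
  have hmulx : ∀ (k : H) (q q' : G), (c k (q*q') * (c' k (q*q'))⁻¹ : ℂˣ) =
      (c k q * (c' k q)⁻¹) * (c k q' * (c' k q')⁻¹) := by
    intro k q q'
    apply units_eq_of_val
    push_cast
    exact hrat k q q'
  set xh : H → (G →* ℂˣ) := fun k => MonoidHom.mk' (fun q => c k q * (c' k q)⁻¹) (hmulx k)
    with hxh
  refine ⟨fun k => Additive.ofMul (xh k), fun k k' => ?_⟩
  simp only [Representation.isTrivial_apply]
  have hsub : (mkCocycle Hc - mkCocycle Hc' : twoCocycles (AA H G)) (k, k') =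
      (mkCocycle Hc (k, k') : Additive (G →* ℂˣ)) - mkCocycle Hc' (k, k') := rfl
  show (Additive.ofMul (xh k') - Additive.ofMul (xh (k*k')) + Additive.ofMul (xh k)
      : Additive (G →* ℂˣ)) = _
  rw [hsub, mkCocycle_apply, mkCocycle_apply, ← ofMul_div, ← ofMul_mul, ← ofMul_div]
  refine congrArg Additive.ofMul (MonoidHom.ext fun q => ?_)
  apply units_eq_of_val
  simp only [MonoidHom.div_apply, MonoidHom.mul_apply, hxh, MonoidHom.mk'_apply, mkHom_apply]
  push_cast
  field_simp


lemma toF_add (f₁ f₂ : twoCocycles (AA G H)) (g h : G) :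
    toF (f₁ + f₂) g h = toF f₁ g h * toF f₂ g h := by
  have hadd : ((f₁ + f₂ : twoCocycles (AA G H)) (g,h) : Additive (H →* ℂˣ)) =
      (f₁ (g,h) : Additive (H →* ℂˣ)) + (f₂ (g,h) : Additive (H →* ℂˣ)) := rfl
  show Additive.toMul (α := H →* ℂˣ) ((f₁ + f₂ : twoCocycles (AA G H)) (g,h)) = _
  rw [hadd, toMul_add]
  rfl

lemma IsSplit.add {f₁ f₂ : twoCocycles (AA G H)} {c₁ c₂ : H → G → ℂˣ}
    (H1 : IsSplit (toF f₁) c₁) (H2 : IsSplit (toF f₂) c₂) :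
    IsSplit (toF (f₁ + f₂)) (fun k q => c₁ k q * c₂ k q) := by
  intro k g h
  rw [toF_add]
  have h1 := congrArg Units.val (H1 k g h)
  have h2 := congrArg Units.val (H2 k g h)
  apply units_eq_of_val
  show ((toF f₁ g h k * toF f₂ g h k : ℂˣ) : ℂ) = _
  push_cast at h1 h2 ⊢
  rw [h1, h2]
  field_simp

lemma mkCocycle_add {f₁ f₂ : twoCocycles (AA G H)} {c₁ c₂ : H → G → ℂˣ}
    (H1 : IsSplit (toF f₁) c₁) (H2 : IsSplit (toF f₂) c₂) :
    mkCocycle (H1.add H2) = mkCocycle H1 + mkCocycle H2 := by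
  apply Subtype.ext
  funext p
  show Additive.ofMul _ = (Additive.ofMul (mkHom H1 p.1 p.2) + Additive.ofMul (mkHom H2 p.1 p.2)
    : Additive (G →* ℂˣ))
  rw [← ofMul_mul]
  refine congrArg Additive.ofMul (MonoidHom.ext fun q => ?_)
  apply units_eq_of_val
  simp only [MonoidHom.mul_apply, mkHom_apply]
  push_cast
  field_simp

lemma exists_isSplit_zero {f : twoCocycles (AA G H)} (hf : f ∈ twoCoboundaries (AA G H)) :
    ∃ c : H → G → ℂˣ, ∃ Hc : IsSplit (toF f) c, mkCocycle Hc = 0 := by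
  rw [mem_twoCoboundaries_iff] at hf
  obtain ⟨x, hx⟩ := hf
  let y : G → Additive (H →* ℂˣ) := x
  have hx' : ∀ g h : G, (y h - y (g*h) + y g : Additive (H →* ℂˣ)) = f (g, h) := by
    intro g h
    simpa only [Representation.isTrivial_apply] using hx g h
  set c : H → G → ℂˣ := fun k g => Additive.toMul (α := H →* ℂˣ) (y g) k with hcdef
  have Hc : IsSplit (toF f) c := by
    intro k g h
    have := congrArg (fun z => Additive.toMul (α := H →* ℂˣ) z k) (hx' g h)
    simp only [toMul_add, toMul_sub, MonoidHom.mul_apply, MonoidHom.div_apply] at this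
    show toF f g h k = _
    rw [toF, ← this, div_eq_mul_inv]
  refine ⟨c, Hc, ?_⟩
  apply Subtype.ext
  funext p
  show Additive.ofMul (mkHom Hc p.1 p.2) = (0 : Additive (G →* ℂˣ))
  rw [show (0 : Additive (G →* ℂˣ)) = Additive.ofMul (1 : G →* ℂˣ) from rfl]
  refine congrArg Additive.ofMul (MonoidHom.ext fun q => ?_)
  apply units_eq_of_val
  have hm := congrArg Units.val
    (map_mul (Additive.toMul (α := H →* ℂˣ) (y q)) p.1 p.2)
  simp only [mkHom_apply, hcdef, MonoidHom.one_apply]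
  push_cast at hm ⊢
  rw [hm]
  field_simp

lemma isSplit_transpose {f : twoCocycles (AA G H)} {c : H → G → ℂˣ}
    (Hc : IsSplit (toF f) c) :
    IsSplit (toF (mkCocycle Hc)) (fun q k => c k q) := by
  intro q k k'
  show mkHom Hc k k' q = _
  apply units_eq_of_val
  simp only [mkHom_apply]
  push_cast
  field_simp

lemma mkCocycle_transpose {f : twoCocycles (AA G H)} {c : H → G → ℂˣ}
    (Hc : IsSplit (toF f) c) :
    mkCocycle (isSplit_transpose Hc) = f := by
  apply Subtype.ext
  funext p
  show Additive.ofMul (mkHom (isSplit_transpose Hc) p.1 p.2) =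
    (f (p.1, p.2) : Additive (H →* ℂˣ))
  apply Additive.toMul.injective
  refine MonoidHom.ext fun k => ?_
  show mkHom (isSplit_transpose Hc) p.1 p.2 k = toF f p.1 p.2 k
  rw [Hc k p.1 p.2]
  apply units_eq_of_val
  simp only [mkHom_apply]
  push_cast
  field_simp

noncomputable def phi0 (SG : Split G) : twoCocycles (AA G H) → H2 (AA H G) :=
  fun f => Submodule.Quotient.mk (mkCocycle (cchoice_spec SG f))

lemma phi0_eq (SG : Split G) (f : twoCocycles (AA G H)) {c : H → G → ℂˣ}
    (Hc : IsSplit (toF f) c) :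
    phi0 SG f = Submodule.Quotient.mk (mkCocycle Hc) :=
  mkCocycle_congr (cchoice_spec SG f) Hc

lemma phi0_add (SG : Split G) (f₁ f₂ : twoCocycles (AA G H)) :
    phi0 SG (f₁ + f₂) = phi0 SG f₁ + phi0 SG f₂ := by
  rw [phi0_eq SG (f₁ + f₂) ((cchoice_spec SG f₁).add (cchoice_spec SG f₂)),
    mkCocycle_add (cchoice_spec SG f₁) (cchoice_spec SG f₂)]
  rfl

lemma phi0_coboundary (SG : Split G) (f : twoCocycles (AA G H))
    (hf : f ∈ twoCoboundaries (AA G H)) : phi0 SG f = 0 := by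
  obtain ⟨c, Hc, h0⟩ := exists_isSplit_zero hf
  rw [phi0_eq SG f Hc, h0]
  rfl

set_option maxHeartbeats 2000000 in
set_option synthInstance.maxHeartbeats 400000 in
noncomputable def PhiHomAux (G H : Type) [Group G] [Group H] (SG : Split G) :
    twoCocycles (AA G H) →+ H2 (AA H G) :=
  AddMonoidHom.mk' (phi0 (G := G) (H := H) SG) (phi0_add SG)

set_option maxHeartbeats 2000000 in
set_option synthInstance.maxHeartbeats 400000 in
noncomputable def PhiHom (G H : Type) [Group G] [Group H] (SG : Split G) :
    H2 (AA G H) →ₗ[ℤ] H2 (AA H G) :=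
  Submodule.liftQ _ ((PhiHomAux G H SG).toIntLinearMap)
    (by intro f hf; rw [LinearMap.mem_ker]; exact phi0_coboundary SG f hf)

set_option maxHeartbeats 1000000 in
lemma PhiHom_mk (SG : Split G) (f : twoCocycles (AA G H)) :
    PhiHom G H SG (Submodule.Quotient.mk f) = phi0 SG f := by
  exact Submodule.liftQ_apply _ _ f

set_option maxHeartbeats 1000000 in
lemma PhiHom_PhiHom (SG : Split G) (SH : Split H) (y : H2 (AA G H)) :
    PhiHom H G SH (PhiHom G H SG y) = y := by
  obtain ⟨f, rfl⟩ := Submodule.Quotient.mk_surjective _ y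
  rw [PhiHom_mk]
  show PhiHom H G SH (Submodule.Quotient.mk (mkCocycle (cchoice_spec SG f))) = _
  rw [PhiHom_mk, phi0_eq SH _ (isSplit_transpose (cchoice_spec SG f)),
    mkCocycle_transpose (cchoice_spec SG f)]

set_option maxHeartbeats 1000000 in
noncomputable def h2Equiv (SG : Split G) (SH : Split H) : H2 (AA G H) ≃+ H2 (AA H G) :=
  AddEquiv.mk' ⟨PhiHom G H SG, PhiHom H G SH, PhiHom_PhiHom SG SH, PhiHom_PhiHom SH SG⟩
    (map_add (PhiHom G H SG))

end H2Symm

/-- Let `Q` and `K` be finite groups with `H²(Q, ℂˣ)` and `H²(K, ℂˣ)`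
both trivial (trivial actions).  Then `H²(Q, Hom(K, ℂˣ)) ≅ H²(K, Hom(Q, ℂˣ))` as
abelian groups, where the character groups carry the trivial actions. -/
theorem h2_characters_symm
    (Q K : Type) [Group Q] [Finite Q] [Group K] [Finite K]
    (hQ : Subsingleton (groupCohomology (Rep.trivial ℤ Q (Additive ℂˣ)) 2))
    (hK : Subsingleton (groupCohomology (Rep.trivial ℤ K (Additive ℂˣ)) 2)) :
    Nonempty
      (groupCohomology (Rep.trivial ℤ Q (Additive (K →* ℂˣ))) 2 ≃+
        groupCohomology (Rep.trivial ℤ K (Additive (Q →* ℂˣ))) 2) := by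
  have SQ : H2Symm.Split Q := H2Symm.split_of_subsingleton hQ
  have SK : H2Symm.Split K := H2Symm.split_of_subsingleton hK
  exact ⟨(H2Symm.isoAddEquiv (H2Symm.isoH2 (H2Symm.AA Q K))).trans
    ((H2Symm.h2Equiv SQ SK).trans
      (H2Symm.isoAddEquiv (H2Symm.isoH2 (H2Symm.AA K Q))).symm)⟩
end

section
/- Let A be a finite abelian group (written multiplicatively) and A* = Hom(A, ℂˣ) its character group. Let q : A × A* → ℂˣ be defined by q(a, χ) = χ(a). Call B : A × A → ℂˣ an alternating bicharacter if it is multiplicative in each variable and B(a,a) = 1 for all a ∈ A. For an alternating bicharacter B and an automorphism φ of A, define T_{B,φ} : A × A* → A × A* by T_{B,φ}(a, χ) = (φ(a), (B(a,−)·χ) ∘ φ⁻¹). Then: (1) each T_{B,φ} is a group automorphism of A × A* satisfying q(T_{B,φ}(a,χ)) = q(a,χ) for all (a,χ); (2) T_{B,φ} ∘ T_{B',φ'} = T_{B'',φφ'} where B''(a,a') = B(φ'(a), φ'(a')) · B'(a,a'); and (3) the assignment (B, φ) ↦ T_{B,φ} is injective, so it defines an injective group homomorphism from the semidirect product of the group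 of alternating bicharacters on A by Aut(A) into the group of q-preserving automorphisms of A × A*. -/
/-- An alternating bicharacter on a (multiplicative) abelian group `A` with values
in `ℂˣ`: multiplicative in each variable and `B(a,a) = 1`. -/
def IsAltBichar {A : Type} [CommGroup A] (B : A → A → ℂˣ) : Prop :=
  (∀ a a' x : A, B (a * a') x = B a x * B a' x) ∧
  (∀ a x x' : A, B a (x * x') = B a x * B a x') ∧
  (∀ a : A, B a a = 1)

/-- The map `T_{B,φ} : A × A* → A × A*`, `(a, χ) ↦ (φ(a), (B(a,−)·χ) ∘ φ⁻¹)`. -/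
def Tmap {A : Type} [CommGroup A] {B : A → A → ℂˣ} (hB : IsAltBichar B)
    (φ : A ≃* A) : A × (A →* ℂˣ) → A × (A →* ℂˣ) :=
  fun p =>
    (φ p.1, (MonoidHom.mk' (B p.1) (fun x x' => hB.2.1 p.1 x x') * p.2).comp
      φ.symm.toMonoidHom)

/-- The quadratic form `q(a, χ) = χ(a)` on `A × A*`. -/
def qForm {A : Type} [CommGroup A] (p : A × (A →* ℂˣ)) : ℂˣ := p.2 p.1

/-- For a finite abelian group `A` with character group `A* = Hom(A, ℂˣ)`
and `q(a,χ) = χ(a)`: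
(1) each `T_{B,φ}` is a group automorphism of `A × A*` preserving `q`;
(2) `T_{B,φ} ∘ T_{B',φ'} = T_{B'',φφ'}` with `B''(a,a') = B(φ'(a),φ'(a'))·B'(a,a')`;
(3) `(B,φ) ↦ T_{B,φ}` is injective. -/
theorem Tmap_orthogonal_embedding (A : Type) [CommGroup A] [Finite A] :
    (∀ (B : A → A → ℂˣ) (hB : IsAltBichar B) (φ : A ≃* A),
      (∀ p p' : A × (A →* ℂˣ), Tmap hB φ (p * p') = Tmap hB φ p * Tmap hB φ p') ∧
      Function.Bijective (Tmap hB φ) ∧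
      (∀ p : A × (A →* ℂˣ), qForm (Tmap hB φ p) = qForm p)) ∧
    (∀ (B B' : A → A → ℂˣ) (hB : IsAltBichar B) (hB' : IsAltBichar B')
        (φ φ' : A ≃* A),
      ∃ hB'' : IsAltBichar (fun a a' => B (φ' a) (φ' a') * B' a a'),
        Tmap hB φ ∘ Tmap hB' φ' = Tmap hB'' (φ'.trans φ)) ∧
    (∀ (B B' : A → A → ℂˣ) (hB : IsAltBichar B) (hB' : IsAltBichar B')
        (φ φ' : A ≃* A), Tmap hB φ = Tmap hB' φ' → B = B' ∧ φ = φ') := by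
  refine ⟨?_, ?_, ?_⟩
  · intro B hB φ
    refine ⟨?_, ?_, ?_⟩
    · intro p p'
      refine Prod.ext (map_mul φ _ _) ?_
      ext x
      simp [Tmap, hB.1, mul_comm, mul_left_comm, mul_assoc]
    · refine Function.bijective_iff_has_inverse.mpr
        ⟨fun p => (φ.symm p.1,
          MonoidHom.mk' (fun x => (B (φ.symm p.1) x)⁻¹)
            (fun x x' => by simp only [hB.2.1, mul_inv]) * p.2.comp φ.toMonoidHom),
         ?_, ?_⟩
      · intro p
        refine Prod.ext (φ.symm_apply_apply _) ?_
        ext x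
        simp [Tmap]
      · intro p
        refine Prod.ext (φ.apply_symm_apply _) ?_
        ext x
        simp [Tmap]
    · intro p
      simp [Tmap, qForm, hB.2.2]
  · intro B B' hB hB' φ φ'
    refine ⟨⟨fun a a' x => by
              simp [map_mul, hB.1, hB'.1, mul_comm, mul_left_comm, mul_assoc],
             fun a x x' => by
              simp [map_mul, hB.2.1, hB'.2.1, mul_comm, mul_left_comm, mul_assoc],
             fun a => by simp [hB.2.2, hB'.2.2]⟩, ?_⟩
    funext p
    refine Prod.ext rfl ?_
    ext x
    simp [Tmap, mul_assoc]
  · intro B B' hB hB' φ φ' h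
    have hφ : φ = φ' := by
      ext a
      have := congrArg Prod.fst (congrFun h (a, 1))
      simpa [Tmap] using this
    subst hφ
    refine ⟨?_, rfl⟩
    funext a x
    have := congrArg Prod.snd (congrFun h (a, 1))
    have h2 := congrArg (fun f : A →* ℂˣ => f (φ x)) this
    simpa [Tmap] using h2
end
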